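/- Suppose α ∈ (0,1) and f : X → {0,1} is measurable with positive positive-versus-negative error, i.e., ∫ 1{f(x) ≠ 1} dP_p(x) + ∫ 1{f(x) ≠ 0} dP_n(x) > 0. Then for every feasible weight function w one has J(f, w) > 0. -/

import Mathlib

open MeasureTheory

/-- A weight function `w : X → [0,1]` is feasible if it is measurable and `∫ w dP_u = 1−α`. -/
def Feasible {X : Type*} [MeasurableSpace X] (Pu : Measure X) (α : ℝ) (w : X → ℝ) : Prop :=
  Measurable w ∧ (∀ x, w x ∈ Set.Icc (0:ℝ) 1) ∧ ∫ x, w x ∂Pu = 1 - α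

/-- The CVIR objective with 0-1 loss:
`J(f, w) = ∫ 1{f ≠ 1} dP_p + (1/(1−α))·∫ w·1{f ≠ 0} dP_u`. -/
noncomputable def cvirJ {X : Type*} [MeasurableSpace X] (Pp Pu : Measure X) (α : ℝ)
    (f w : X → ℝ) : ℝ :=
  (Pp {x | f x ≠ 1}).toReal + (1 / (1 - α)) * ∫ x in {x | f x ≠ 0}, w x ∂Pu

/-- If `f` has positive positive-versus-negative error, then for every feasible weight `w` the
CVIR objective `J(f, w)` is strictly positive. -/
theorem cvir_positive_error_positive_objective {X : Type*} [MeasurableSpace X]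
    (Pp Pn : Measure X) [IsProbabilityMeasure Pp] [IsProbabilityMeasure Pn]
    (α : ℝ) (hα : α ∈ Set.Ioo (0:ℝ) 1)
    (Pu : Measure X) (hPu : Pu = ENNReal.ofReal α • Pp + ENNReal.ofReal (1 - α) • Pn)
    (f : X → ℝ) (hf_m : Measurable f) (hf01 : ∀ x, f x = 0 ∨ f x = 1)
    (herr : 0 < (Pp {x | f x ≠ 1}).toReal + (Pn {x | f x ≠ 0}).toReal) :
    ∀ w : X → ℝ, Feasible Pu α w → 0 < cvirJ Pp Pu α f w := by
  intro w hw
  obtain ⟨hα0, hα1⟩ := hα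
  have h1α : (0:ℝ) < 1 - α := by linarith
  obtain ⟨hwm, hwb, hwint⟩ := hw
  -- s = {f ≠ 0}
  set s : Set X := {x | f x ≠ 0} with hs_def
  have hs : MeasurableSet s := (hf_m (measurableSet_singleton 0)).compl
  have hscompl : sᶜ = {x | f x = 0} := by
    ext x; simp [hs_def]
  -- Pu is a finite measure
  haveI : IsFiniteMeasure Pu := by
    constructor
    rw [hPu]
    simp only [Measure.add_apply, Measure.smul_apply, smul_eq_mul, measure_univ, mul_one]
    exact ENNReal.add_lt_top.mpr ⟨ENNReal.ofReal_lt_top, ENNReal.ofReal_lt_top⟩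
  -- w is integrable
  have hwi : Integrable w Pu := by
    refine (integrable_const (1:ℝ)).mono' hwm.aestronglyMeasurable ?_
    filter_upwards with x
    rw [Real.norm_eq_abs, abs_of_nonneg (hwb x).1]
    exact (hwb x).2
  -- the set integral of w over s is nonneg
  have hset_nonneg : 0 ≤ ∫ x in s, w x ∂Pu :=
    setIntegral_nonneg hs fun x _ => (hwb x).1
  have hterm2 : 0 ≤ (1 / (1 - α)) * ∫ x in s, w x ∂Pu :=
    mul_nonneg (by positivity) hset_nonneg
  by_cases hp : 0 < (Pp {x | f x ≠ 1}).toReal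
  · unfold cvirJ
    exact add_pos_of_pos_of_nonneg hp hterm2
  · -- Pp {f ≠ 1} = 0, so Pn {f ≠ 0} > 0
    have hp0 : Pp {x | f x ≠ 1} = 0 := by
      have hle := ENNReal.toReal_nonneg (a := Pp {x | f x ≠ 1})
      have : (Pp {x | f x ≠ 1}).toReal = 0 := le_antisymm (not_lt.mp hp) hle
      exact (ENNReal.toReal_eq_zero_iff _).mp this |>.resolve_right (measure_ne_top _ _)
    have hn : 0 < (Pn s).toReal := by
      have := herr
      rw [show (Pp {x | f x ≠ 1}).toReal = 0 by simp [hp0]] at this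
      simpa using this
    have hnpos : 0 < Pn s := by
      rcases (ENNReal.toReal_pos_iff.mp hn) with ⟨h1, _⟩
      exact h1
    -- claim: set integral over s is positive
    have hmain : 0 < ∫ x in s, w x ∂Pu := by
      by_contra hcon
      have hzero : ∫ x in s, w x ∂Pu = 0 := le_antisymm (not_lt.mp hcon) hset_nonneg
      have hsplit : ∫ x in s, w x ∂Pu + ∫ x in sᶜ, w x ∂Pu = ∫ x, w x ∂Pu :=
        integral_add_compl hs hwi
      have hcompl_eq : ∫ x in sᶜ, w x ∂Pu = 1 - α := by
        rw [hzero, zero_add] at hsplit; rw [hsplit, hwint]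
      -- bound by measure of sᶜ
      have hle : ∫ x in sᶜ, w x ∂Pu ≤ (Pu sᶜ).toReal := by
        calc ∫ x in sᶜ, w x ∂Pu ≤ ∫ x in sᶜ, (1:ℝ) ∂Pu := by
              refine setIntegral_mono_on hwi.integrableOn (integrable_const 1).integrableOn
                hs.compl fun x _ => (hwb x).2
          _ = (Pu sᶜ).toReal := by simp; rfl
      -- compute Pu sᶜ
      have hpp : Pp sᶜ = 0 := by
        refine measure_mono_null ?_ hp0
        rw [hscompl]
        intro x hx
        simp only [Set.mem_setOf_eq] at hx ⊢
        rw [hx]; norm_num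
      have hpu : Pu sᶜ = ENNReal.ofReal (1 - α) * Pn sᶜ := by
        rw [hPu]
        simp [Measure.add_apply, Measure.smul_apply, smul_eq_mul, hpp]
      have hpn : Pn sᶜ < 1 := by
        rw [measure_compl hs (measure_ne_top _ _), measure_univ]
        exact ENNReal.sub_lt_self ENNReal.one_ne_top one_ne_zero hnpos.ne'
      have hlt : (Pu sᶜ).toReal < 1 - α := by
        rw [hpu, ENNReal.toReal_mul, ENNReal.toReal_ofReal h1α.le]
        have h1 : (Pn sᶜ).toReal < 1 := by
          have := ENNReal.toReal_lt_toReal (measure_ne_top Pn sᶜ) (ENNReal.one_ne_top)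
          simpa using this.mpr hpn
        nlinarith
      linarith [hcompl_eq ▸ hle]
    unfold cvirJ
    have : 0 < (1 / (1 - α)) * ∫ x in s, w x ∂Pu :=
      mul_pos (by positivity) hmain
    have hnn : 0 ≤ (Pp {x | f x ≠ 1}).toReal := ENNReal.toReal_nonneg
    linarith
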